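/- Under the same hypotheses, the backward and forward energy densities satisfy the balance laws ∂_t(|R|²) − ∂_x(c|R|²) = (c'/(2c))(|R|² S₁ − R₁ |S|²) and ∂_t(|S|²) + ∂_x(c|S|²) = −(c'/(2c))(|R|² S₁ − R₁ |S|²). -/

import Mathlib

open scoped BigOperators

/-- Partial derivative in the first (time) variable of a curried function. -/
noncomputable def ptd (f : ℝ → ℝ → ℝ) (t x : ℝ) : ℝ := deriv (fun τ => f τ x) t

/-- Partial derivative in the second (space) variable of a curried function. -/
noncomputable def pxd (f : ℝ → ℝ → ℝ) (t x : ℝ) : ℝ := deriv (fun y => f t y) x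

lemma hasDerivAt_fst (F : ℝ × ℝ → ℝ) (t x : ℝ) (hF : DifferentiableAt ℝ F (t, x)) :
    HasDerivAt (fun τ => F (τ, x)) (fderiv ℝ F (t, x) (1, 0)) t := by
  have h1 : HasDerivAt (fun τ : ℝ => (τ, x)) ((1 : ℝ), (0 : ℝ)) t :=
    (hasDerivAt_id t).prodMk (hasDerivAt_const t x)
  exact hF.hasFDerivAt.comp_hasDerivAt t h1

lemma hasDerivAt_snd (F : ℝ × ℝ → ℝ) (t x : ℝ) (hF : DifferentiableAt ℝ F (t, x)) :
    HasDerivAt (fun y => F (t, y)) (fderiv ℝ F (t, x) (0, 1)) x := by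
  have h1 : HasDerivAt (fun y : ℝ => (t, y)) ((0 : ℝ), (1 : ℝ)) x :=
    (hasDerivAt_const x t).prodMk (hasDerivAt_id x)
  exact hF.hasFDerivAt.comp_hasDerivAt x h1

lemma contDiff_fderiv_apply (F : ℝ × ℝ → ℝ) (hF : ContDiff ℝ 2 F) (v : ℝ × ℝ) :
    ContDiff ℝ 1 (fun p => fderiv ℝ F p v) :=
  (hF.fderiv_right (le_refl _)).clm_apply contDiff_const

lemma ptd_hasDerivAt (f : ℝ → ℝ → ℝ) (hf : Differentiable ℝ (Function.uncurry f)) (t x : ℝ) :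
    HasDerivAt (fun τ => f τ x) (ptd f t x) t := by
  have h := hasDerivAt_fst (Function.uncurry f) t x hf.differentiableAt
  have hv : ptd f t x = fderiv ℝ (Function.uncurry f) (t, x) (1, 0) := h.deriv
  rw [hv]; exact h

lemma pxd_hasDerivAt (f : ℝ → ℝ → ℝ) (hf : Differentiable ℝ (Function.uncurry f)) (t x : ℝ) :
    HasDerivAt (fun y => f t y) (pxd f t x) x := by
  have h := hasDerivAt_snd (Function.uncurry f) t x hf.differentiableAt
  have hv : pxd f t x = fderiv ℝ (Function.uncurry f) (t, x) (0, 1) := h.deriv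
  rw [hv]; exact h

lemma ptd_fun_eq (f : ℝ → ℝ → ℝ) (hf : ContDiff ℝ 2 (Function.uncurry f)) :
    Function.uncurry (ptd f) = fun p => fderiv ℝ (Function.uncurry f) p (1, 0) := by
  funext p
  exact (hasDerivAt_fst (Function.uncurry f) p.1 p.2
    ((hf.differentiable two_ne_zero).differentiableAt)).deriv

lemma pxd_fun_eq (f : ℝ → ℝ → ℝ) (hf : ContDiff ℝ 2 (Function.uncurry f)) :
    Function.uncurry (pxd f) = fun p => fderiv ℝ (Function.uncurry f) p (0, 1) := by
  funext p
  exact (hasDerivAt_snd (Function.uncurry f) p.1 p.2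
    ((hf.differentiable two_ne_zero).differentiableAt)).deriv

lemma uncurry_ptd_diff (f : ℝ → ℝ → ℝ) (hf : ContDiff ℝ 2 (Function.uncurry f)) :
    Differentiable ℝ (Function.uncurry (ptd f)) := by
  rw [ptd_fun_eq f hf]
  exact (contDiff_fderiv_apply _ hf _).differentiable one_ne_zero

lemma uncurry_pxd_diff (f : ℝ → ℝ → ℝ) (hf : ContDiff ℝ 2 (Function.uncurry f)) :
    Differentiable ℝ (Function.uncurry (pxd f)) := by
  rw [pxd_fun_eq f hf]
  exact (contDiff_fderiv_apply _ hf _).differentiable one_ne_zero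

lemma mixed_symm (f : ℝ → ℝ → ℝ) (hf : ContDiff ℝ 2 (Function.uncurry f)) (t x : ℝ) :
    ptd (pxd f) t x = pxd (ptd f) t x := by
  set F := Function.uncurry f with hF
  have hdF : ∀ y, HasFDerivAt F (fderiv ℝ F y) y := fun y =>
    ((hf.differentiable two_ne_zero).differentiableAt).hasFDerivAt
  have hd2 : HasFDerivAt (fderiv ℝ F) (fderiv ℝ (fderiv ℝ F) (t, x)) (t, x) :=
    (((hf.fderiv_right (m := 1) (le_refl _)).differentiable one_ne_zero).differentiableAt).hasFDerivAt
  have hsymm := second_derivative_symmetric hdF hd2 ((1:ℝ), (0:ℝ)) ((0:ℝ), (1:ℝ))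
  have key : ∀ v : ℝ × ℝ, fderiv ℝ (fun p => fderiv ℝ F p v) (t, x)
      = (fderiv ℝ (fderiv ℝ F) (t, x)).flip v := by
    intro v
    have hcl := hd2.clm_apply (hasFDerivAt_const v (t, x))
    rw [hcl.fderiv, ContinuousLinearMap.comp_zero, zero_add]
  have e1 : ptd (pxd f) t x
      = fderiv ℝ (fun p => fderiv ℝ F p ((0:ℝ), (1:ℝ))) (t, x) (1, 0) := by
    have h0 : ptd (pxd f) t x = deriv (fun τ => Function.uncurry (pxd f) (τ, x)) t := rfl
    rw [h0, pxd_fun_eq f hf]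
    exact (hasDerivAt_fst _ t x
      ((contDiff_fderiv_apply _ hf _).differentiable one_ne_zero).differentiableAt).deriv
  have e2 : pxd (ptd f) t x
      = fderiv ℝ (fun p => fderiv ℝ F p ((1:ℝ), (0:ℝ))) (t, x) (0, 1) := by
    have h0 : pxd (ptd f) t x = deriv (fun y => Function.uncurry (ptd f) (t, y)) x := rfl
    rw [h0, ptd_fun_eq f hf]
    exact (hasDerivAt_snd _ t x
      ((contDiff_fderiv_apply _ hf _).differentiable one_ne_zero).differentiableAt).deriv
  rw [e1, e2, key, key]
  simpa using hsymm

lemma ptd_ptd_hasDerivAt (f : ℝ → ℝ → ℝ) (hf : ContDiff ℝ 2 (Function.uncurry f)) (t x : ℝ) :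
    HasDerivAt (fun τ => ptd f τ x) (ptd (ptd f) t x) t :=
  ptd_hasDerivAt (ptd f) (uncurry_ptd_diff f hf) t x

lemma ptd_pxd_hasDerivAt (f : ℝ → ℝ → ℝ) (hf : ContDiff ℝ 2 (Function.uncurry f)) (t x : ℝ) :
    HasDerivAt (fun y => ptd f t y) (pxd (ptd f) t x) x :=
  pxd_hasDerivAt (ptd f) (uncurry_ptd_diff f hf) t x

lemma pxd_ptd_hasDerivAt (f : ℝ → ℝ → ℝ) (hf : ContDiff ℝ 2 (Function.uncurry f)) (t x : ℝ) :
    HasDerivAt (fun τ => pxd f τ x) (ptd (pxd f) t x) t :=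
  ptd_hasDerivAt (pxd f) (uncurry_pxd_diff f hf) t x

lemma pxd_pxd_hasDerivAt (f : ℝ → ℝ → ℝ) (hf : ContDiff ℝ 2 (Function.uncurry f)) (t x : ℝ) :
    HasDerivAt (fun y => pxd f t y) (pxd (pxd f) t x) x :=
  pxd_hasDerivAt (pxd f) (uncurry_pxd_diff f hf) t x


/-- Balance laws for the backward and forward energy densities:
∂_t|R|² − ∂_x(c|R|²) = (c'/(2c))(|R|²S₁ − R₁|S|²) and
∂_t|S|² + ∂_x(c|S|²) = −(c'/(2c))(|R|²S₁ − R₁|S|²). -/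
theorem stmt6 (α γ : ℝ) (hα : 0 < α) (hγ : 0 < γ)
    (n : Fin 3 → ℝ → ℝ → ℝ)
    (hsm : ∀ i, ContDiff ℝ 2 (Function.uncurry (n i)))
    (hunit : ∀ t x, ∑ j, (n j t x) ^ 2 = 1)
    (c : ℝ → ℝ) (hc : c = fun s => Real.sqrt (α + (γ - α) * s ^ 2))
    (hpos : ∀ t x, 0 < α + (γ - α) * (n 0 t x) ^ 2)
    (ζ : Fin 3 → ℝ) (hζ0 : ζ 0 = γ) (hζ1 : ζ 1 = α) (hζ2 : ζ 2 = α)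
    (hwave : ∀ i t x,
      ptd (fun t x => ptd (n i) t x) t x
        - pxd (fun t x => (c (n 0 t x)) ^ 2 * pxd (n i) t x) t x
      = (-(∑ j, (ptd (n j) t x) ^ 2)
          + (2 * (c (n 0 t x)) ^ 2 - ζ i) * (∑ j, (pxd (n j) t x) ^ 2)) * n i t x)
    (R S : Fin 3 → ℝ → ℝ → ℝ)
    (hR : ∀ i t x, R i t x = ptd (n i) t x + c (n 0 t x) * pxd (n i) t x)
    (hS : ∀ i t x, S i t x = ptd (n i) t x - c (n 0 t x) * pxd (n i) t x)
    (cp : ℝ → ℝ) (hcp : ∀ s, cp s = (γ - α) * s / c s) :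
    ∀ t x,
      (ptd (fun t x => ∑ j, (R j t x) ^ 2) t x
          - pxd (fun t x => c (n 0 t x) * ∑ j, (R j t x) ^ 2) t x
        = (cp (n 0 t x) / (2 * c (n 0 t x))) *
            ((∑ j, (R j t x) ^ 2) * S 0 t x - R 0 t x * (∑ j, (S j t x) ^ 2))) ∧
      (ptd (fun t x => ∑ j, (S j t x) ^ 2) t x
          + pxd (fun t x => c (n 0 t x) * ∑ j, (S j t x) ^ 2) t x
        = -((cp (n 0 t x) / (2 * c (n 0 t x))) *
            ((∑ j, (R j t x) ^ 2) * S 0 t x - R 0 t x * (∑ j, (S j t x) ^ 2)))) := by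
  intro t x
  have hdn : ∀ i, Differentiable ℝ (Function.uncurry (n i)) := fun i =>
    (hsm i).differentiable two_ne_zero
  have hq : 0 < α + (γ - α) * (n 0 t x) ^ 2 := hpos t x
  have hc0pos : 0 < c (n 0 t x) := by rw [hc]; exact Real.sqrt_pos.mpr hq
  have hc0 : c (n 0 t x) ≠ 0 := ne_of_gt hc0pos
  -- derivative of c at n 0 t x
  have hcderiv : HasDerivAt c (cp (n 0 t x)) (n 0 t x) := by
    have hinner : HasDerivAt (fun s : ℝ => α + (γ - α) * s ^ 2)
        ((γ - α) * (2 * n 0 t x)) (n 0 t x) := by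
      have h1 : HasDerivAt (fun s : ℝ => s ^ 2) (2 * n 0 t x) (n 0 t x) := by
        simpa using hasDerivAt_pow 2 (n 0 t x)
      simpa using (h1.const_mul (γ - α)).const_add α
    have hs := (Real.hasDerivAt_sqrt (ne_of_gt hq)).comp (n 0 t x) hinner
    have : cp (n 0 t x) = 1 / (2 * Real.sqrt (α + (γ - α) * (n 0 t x) ^ 2))
        * ((γ - α) * (2 * n 0 t x)) := by
      rw [hcp, hc]
      have hsq : Real.sqrt (α + (γ - α) * (n 0 t x) ^ 2) ≠ 0 :=
        ne_of_gt (Real.sqrt_pos.mpr hq)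
      field_simp
    rw [hc, this]
    exact hs
  -- first partials of n i
  have hat : ∀ i, HasDerivAt (fun τ => n i τ x) (ptd (n i) t x) t := fun i =>
    ptd_hasDerivAt (n i) (hdn i) t x
  have hax : ∀ i, HasDerivAt (fun y => n i t y) (pxd (n i) t x) x := fun i =>
    pxd_hasDerivAt (n i) (hdn i) t x
  -- second partials
  have hPt : ∀ i, HasDerivAt (fun τ => ptd (n i) τ x) (ptd (ptd (n i)) t x) t := fun i =>
    ptd_ptd_hasDerivAt (n i) (hsm i) t x
  have hMt : ∀ i, HasDerivAt (fun τ => pxd (n i) τ x) (ptd (pxd (n i)) t x) t := fun i =>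
    pxd_ptd_hasDerivAt (n i) (hsm i) t x
  have hMx : ∀ i, HasDerivAt (fun y => ptd (n i) t y) (ptd (pxd (n i)) t x) x := fun i => by
    have h := ptd_pxd_hasDerivAt (n i) (hsm i) t x
    rwa [← mixed_symm (n i) (hsm i) t x] at h
  have hQx : ∀ i, HasDerivAt (fun y => pxd (n i) t y) (pxd (pxd (n i)) t x) x := fun i =>
    pxd_pxd_hasDerivAt (n i) (hsm i) t x
  -- derivative of c ∘ n0 in each variable
  have hct : HasDerivAt (fun τ => c (n 0 τ x)) (cp (n 0 t x) * ptd (n 0) t x) t :=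
    HasDerivAt.comp t hcderiv (hat 0)
  have hcx : HasDerivAt (fun y => c (n 0 t y)) (cp (n 0 t x) * pxd (n 0) t x) x :=
    HasDerivAt.comp x hcderiv (hax 0)
  -- unit norm constraints
  have hna : ∑ j, n j t x * ptd (n j) t x = 0 := by
    have hsumt : HasDerivAt (fun τ => ∑ j, (n j τ x) ^ 2)
        (∑ j, (2 : ℝ) * n j t x ^ 1 * ptd (n j) t x) t :=
      HasDerivAt.fun_sum fun j _ => by simpa using (hat j).fun_pow 2
    have h0 : (fun τ => ∑ j, (n j τ x) ^ 2) = fun _ => (1 : ℝ) :=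
      funext fun τ => hunit τ x
    rw [h0] at hsumt
    have h1 := (hasDerivAt_const t (1 : ℝ)).unique hsumt
    have h2 : ∑ j : Fin 3, (2:ℝ) * n j t x ^ 1 * ptd (n j) t x
        = 2 * ∑ j : Fin 3, n j t x * ptd (n j) t x := by
      rw [Finset.mul_sum]; congr 1; funext j; ring
    rw [h2] at h1
    linarith [h1.symm]
  have hnb : ∑ j, n j t x * pxd (n j) t x = 0 := by
    have hsumx : HasDerivAt (fun y => ∑ j, (n j t y) ^ 2)
        (∑ j, (2 : ℝ) * n j t x ^ 1 * pxd (n j) t x) x :=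
      HasDerivAt.fun_sum fun j _ => by simpa using (hax j).fun_pow 2
    have h0 : (fun y => ∑ j, (n j t y) ^ 2) = fun _ => (1 : ℝ) :=
      funext fun y => hunit t y
    rw [h0] at hsumx
    have h1 := (hasDerivAt_const x (1 : ℝ)).unique hsumx
    have h2 : ∑ j : Fin 3, (2:ℝ) * n j t x ^ 1 * pxd (n j) t x
        = 2 * ∑ j : Fin 3, n j t x * pxd (n j) t x := by
      rw [Finset.mul_sum]; congr 1; funext j; ring
    rw [h2] at h1
    linarith [h1.symm]
  -- h4 : (γ-α) * n0 = cp * c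
  have h4 : (γ - α) * n 0 t x = cp (n 0 t x) * c (n 0 t x) := by
    rw [hcp]; field_simp
  -- wave equations in pointwise form
  have hW : ∀ i, ptd (ptd (n i)) t x
      - (2 * c (n 0 t x) ^ 1 * (cp (n 0 t x) * pxd (n 0) t x) * pxd (n i) t x
          + c (n 0 t x) ^ 2 * pxd (pxd (n i)) t x)
      = (-(∑ j, (ptd (n j) t x) ^ 2)
          + (2 * (c (n 0 t x)) ^ 2 - ζ i) * (∑ j, (pxd (n j) t x) ^ 2)) * n i t x := by
    intro i
    have hprod : HasDerivAt (fun y => (c (n 0 t y)) ^ 2 * pxd (n i) t y)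
        ((2 * c (n 0 t x) ^ 1 * (cp (n 0 t x) * pxd (n 0) t x)) * pxd (n i) t x
          + c (n 0 t x) ^ 2 * pxd (pxd (n i)) t x) x := by
      have h1 : HasDerivAt (fun y => (c (n 0 t y)) ^ 2)
          (2 * c (n 0 t x) ^ 1 * (cp (n 0 t x) * pxd (n 0) t x)) x := by
        simpa using hcx.fun_pow 2
      exact h1.mul (hQx i)
    have e2 : pxd (fun t x => (c (n 0 t x)) ^ 2 * pxd (n i) t x) t x
        = (2 * c (n 0 t x) ^ 1 * (cp (n 0 t x) * pxd (n 0) t x)) * pxd (n i) t x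
          + c (n 0 t x) ^ 2 * pxd (pxd (n i)) t x := hprod.deriv
    have e1 : ptd (fun t x => ptd (n i) t x) t x = ptd (ptd (n i)) t x := rfl
    have hw := hwave i t x
    rw [e1, e2] at hw
    exact hw
  -- rewrite the goal functions
  have hRfun : (fun (t x : ℝ) => ∑ j, (R j t x) ^ 2)
      = fun t x => ∑ j, (ptd (n j) t x + c (n 0 t x) * pxd (n j) t x) ^ 2 := by
    funext t' x'; simp only [hR]
  have hSfun : (fun (t x : ℝ) => ∑ j, (S j t x) ^ 2)
      = fun t x => ∑ j, (ptd (n j) t x - c (n 0 t x) * pxd (n j) t x) ^ 2 := by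
    funext t' x'; simp only [hS]
  have hcRfun : (fun (t x : ℝ) => c (n 0 t x) * ∑ j, (R j t x) ^ 2)
      = fun t x => c (n 0 t x) * ∑ j, (ptd (n j) t x + c (n 0 t x) * pxd (n j) t x) ^ 2 := by
    funext t' x'; simp only [hR]
  have hcSfun : (fun (t x : ℝ) => c (n 0 t x) * ∑ j, (S j t x) ^ 2)
      = fun t x => c (n 0 t x) * ∑ j, (ptd (n j) t x - c (n 0 t x) * pxd (n j) t x) ^ 2 := by
    funext t' x'; simp only [hS]
  -- derivatives of the R-sums
  have hRt : ∀ (j : Fin 3), HasDerivAt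
      (fun τ => ptd (n j) τ x + c (n 0 τ x) * pxd (n j) τ x)
      (ptd (ptd (n j)) t x
        + (cp (n 0 t x) * ptd (n 0) t x * pxd (n j) t x
            + c (n 0 t x) * ptd (pxd (n j)) t x)) t := fun j =>
    (hPt j).add (hct.mul (hMt j))
  have hRx : ∀ (j : Fin 3), HasDerivAt
      (fun y => ptd (n j) t y + c (n 0 t y) * pxd (n j) t y)
      (ptd (pxd (n j)) t x
        + (cp (n 0 t x) * pxd (n 0) t x * pxd (n j) t x
            + c (n 0 t x) * pxd (pxd (n j)) t x)) x := fun j =>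
    (hMx j).add (hcx.mul (hQx j))
  have hSt : ∀ (j : Fin 3), HasDerivAt
      (fun τ => ptd (n j) τ x - c (n 0 τ x) * pxd (n j) τ x)
      (ptd (ptd (n j)) t x
        - (cp (n 0 t x) * ptd (n 0) t x * pxd (n j) t x
            + c (n 0 t x) * ptd (pxd (n j)) t x)) t := fun j =>
    (hPt j).sub (hct.mul (hMt j))
  have hSx : ∀ (j : Fin 3), HasDerivAt
      (fun y => ptd (n j) t y - c (n 0 t y) * pxd (n j) t y)
      (ptd (pxd (n j)) t x
        - (cp (n 0 t x) * pxd (n 0) t x * pxd (n j) t x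
            + c (n 0 t x) * pxd (pxd (n j)) t x)) x := fun j =>
    (hMx j).sub (hcx.mul (hQx j))
  have hERt : HasDerivAt (fun τ => ∑ j, (ptd (n j) τ x + c (n 0 τ x) * pxd (n j) τ x) ^ 2)
      (∑ j, (2:ℝ) * (ptd (n j) t x + c (n 0 t x) * pxd (n j) t x) ^ 1
        * (ptd (ptd (n j)) t x + (cp (n 0 t x) * ptd (n 0) t x * pxd (n j) t x
            + c (n 0 t x) * ptd (pxd (n j)) t x))) t :=
    HasDerivAt.fun_sum fun j _ => by simpa using (hRt j).fun_pow 2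
  have hERx : HasDerivAt (fun y => ∑ j, (ptd (n j) t y + c (n 0 t y) * pxd (n j) t y) ^ 2)
      (∑ j, (2:ℝ) * (ptd (n j) t x + c (n 0 t x) * pxd (n j) t x) ^ 1
        * (ptd (pxd (n j)) t x + (cp (n 0 t x) * pxd (n 0) t x * pxd (n j) t x
            + c (n 0 t x) * pxd (pxd (n j)) t x))) x :=
    HasDerivAt.fun_sum fun j _ => by simpa using (hRx j).fun_pow 2
  have hESt : HasDerivAt (fun τ => ∑ j, (ptd (n j) τ x - c (n 0 τ x) * pxd (n j) τ x) ^ 2)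
      (∑ j, (2:ℝ) * (ptd (n j) t x - c (n 0 t x) * pxd (n j) t x) ^ 1
        * (ptd (ptd (n j)) t x - (cp (n 0 t x) * ptd (n 0) t x * pxd (n j) t x
            + c (n 0 t x) * ptd (pxd (n j)) t x))) t :=
    HasDerivAt.fun_sum fun j _ => by simpa using (hSt j).fun_pow 2
  have hESx : HasDerivAt (fun y => ∑ j, (ptd (n j) t y - c (n 0 t y) * pxd (n j) t y) ^ 2)
      (∑ j, (2:ℝ) * (ptd (n j) t x - c (n 0 t x) * pxd (n j) t x) ^ 1
        * (ptd (pxd (n j)) t x - (cp (n 0 t x) * pxd (n 0) t x * pxd (n j) t x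
            + c (n 0 t x) * pxd (pxd (n j)) t x))) x :=
    HasDerivAt.fun_sum fun j _ => by simpa using (hSx j).fun_pow 2
  -- the four derivative evaluations in the goal
  have g1 : ptd (fun t x => ∑ j, (R j t x) ^ 2) t x
      = ∑ j, (2:ℝ) * (ptd (n j) t x + c (n 0 t x) * pxd (n j) t x) ^ 1
        * (ptd (ptd (n j)) t x + (cp (n 0 t x) * ptd (n 0) t x * pxd (n j) t x
            + c (n 0 t x) * ptd (pxd (n j)) t x)) := by
    rw [hRfun]; exact hERt.deriv
  have g2 : pxd (fun t x => c (n 0 t x) * ∑ j, (R j t x) ^ 2) t x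
      = cp (n 0 t x) * pxd (n 0) t x
          * (∑ j, (ptd (n j) t x + c (n 0 t x) * pxd (n j) t x) ^ 2)
        + c (n 0 t x) * ∑ j, (2:ℝ) * (ptd (n j) t x + c (n 0 t x) * pxd (n j) t x) ^ 1
          * (ptd (pxd (n j)) t x + (cp (n 0 t x) * pxd (n 0) t x * pxd (n j) t x
              + c (n 0 t x) * pxd (pxd (n j)) t x)) := by
    rw [hcRfun]; exact (hcx.mul hERx).deriv
  have g3 : ptd (fun t x => ∑ j, (S j t x) ^ 2) t x
      = ∑ j, (2:ℝ) * (ptd (n j) t x - c (n 0 t x) * pxd (n j) t x) ^ 1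
        * (ptd (ptd (n j)) t x - (cp (n 0 t x) * ptd (n 0) t x * pxd (n j) t x
            + c (n 0 t x) * ptd (pxd (n j)) t x)) := by
    rw [hSfun]; exact hESt.deriv
  have g4 : pxd (fun t x => c (n 0 t x) * ∑ j, (S j t x) ^ 2) t x
      = cp (n 0 t x) * pxd (n 0) t x
          * (∑ j, (ptd (n j) t x - c (n 0 t x) * pxd (n j) t x) ^ 2)
        + c (n 0 t x) * ∑ j, (2:ℝ) * (ptd (n j) t x - c (n 0 t x) * pxd (n j) t x) ^ 1
          * (ptd (pxd (n j)) t x - (cp (n 0 t x) * pxd (n 0) t x * pxd (n j) t x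
              + c (n 0 t x) * pxd (pxd (n j)) t x)) := by
    rw [hcSfun]; exact (hcx.mul hESx).deriv
  -- abbreviations
  set a0 := ptd (n 0) t x with ha0
  set a1 := ptd (n 1) t x with ha1
  set a2 := ptd (n 2) t x with ha2
  set b0 := pxd (n 0) t x with hb0
  set b1 := pxd (n 1) t x with hb1
  set b2 := pxd (n 2) t x with hb2
  set N0 := n 0 t x with hN0
  set N1 := n 1 t x with hN1
  set N2 := n 2 t x with hN2
  set P0 := ptd (ptd (n 0)) t x with hP0
  set P1 := ptd (ptd (n 1)) t x with hP1
  set P2 := ptd (ptd (n 2)) t x with hP2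
  set M0 := ptd (pxd (n 0)) t x with hM0
  set M1 := ptd (pxd (n 1)) t x with hM1
  set M2 := ptd (pxd (n 2)) t x with hM2
  set Q0 := pxd (pxd (n 0)) t x with hQ0
  set Q1 := pxd (pxd (n 1)) t x with hQ1
  set Q2 := pxd (pxd (n 2)) t x with hQ2
  set c0 := c N0 with hc00
  set k := cp N0 with hk0
  have hW0 := hW 0
  have hW1 := hW 1
  have hW2 := hW 2
  rw [hζ0] at hW0
  rw [hζ1] at hW1
  rw [hζ2] at hW2
  simp only [Fin.sum_univ_three, pow_one] at hna hnb hW0 hW1 hW2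
  constructor
  · rw [g1, g2]
    simp only [hR, hS, Fin.sum_univ_three, pow_one]
    rw [div_mul_eq_mul_div, eq_div_iff (by positivity : (2 : ℝ) * c0 ≠ 0)]
    linear_combination
      (2*c0) * (2*(a0 + c0*b0)*hW0 + 2*(a1 + c0*b1)*hW1 + 2*(a2 + c0*b2)*hW2)
      + (2*c0) * (2*(-(a0^2+a1^2+a2^2) + 2*c0^2*(b0^2+b1^2+b2^2)) - 2*α*(b0^2+b1^2+b2^2)) * hna
      + (2*c0^2) * (2*(-(a0^2+a1^2+a2^2) + 2*c0^2*(b0^2+b1^2+b2^2)) - 2*α*(b0^2+b1^2+b2^2)) * hnb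
      + (-(4*c0*(b0^2+b1^2+b2^2)*(a0 + c0*b0))) * h4
  · rw [g3, g4]
    simp only [hR, hS, Fin.sum_univ_three, pow_one]
    rw [div_mul_eq_mul_div, ← neg_div, eq_div_iff (by positivity : (2 : ℝ) * c0 ≠ 0)]
    linear_combination
      (2*c0) * (2*(a0 - c0*b0)*hW0 + 2*(a1 - c0*b1)*hW1 + 2*(a2 - c0*b2)*hW2)
      + (2*c0) * (2*(-(a0^2+a1^2+a2^2) + 2*c0^2*(b0^2+b1^2+b2^2)) - 2*α*(b0^2+b1^2+b2^2)) * hna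
      + (-(2*c0^2)) * (2*(-(a0^2+a1^2+a2^2) + 2*c0^2*(b0^2+b1^2+b2^2)) - 2*α*(b0^2+b1^2+b2^2)) * hnb
      + (-(4*c0*(b0^2+b1^2+b2^2)*(a0 - c0*b0))) * h4
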